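/- If D ⊂ ℝ^d is a domain containing a whole affine line, then for any injective projective (linear-fractional) map defined on D, the image of D is unbounded; in particular no projective map sends D into the open unit ball while containing a nonempty open ball in its image. Hence the projective squeezing function of D is identically 0. -/

import Mathlib

open scoped BigOperators

/-- A map `φ` is projective on `S ⊆ ℝ^d` if it is induced in affine coordinates by an
invertible linear map of `ℝ^{d+1}` (acting on homogeneous coordinates `(1 : x)`),
whose "denominator" does not vanish on `S`. -/
def IsProjectiveMap {d : ℕ} (S : Set (EuclideanSpace ℝ (Fin d)))
    (φ : EuclideanSpace ℝ (Fin d) → EuclideanSpace ℝ (Fin d)) : Prop :=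
  ∃ A : Matrix (Fin (d + 1)) (Fin (d + 1)) ℝ, IsUnit A.det ∧
    ∀ x ∈ S,
      A.mulVec (Fin.cons 1 (fun i => x i)) 0 ≠ 0 ∧
      ∀ i : Fin d, φ x i =
        A.mulVec (Fin.cons 1 (fun j => x j)) i.succ /
        A.mulVec (Fin.cons 1 (fun j => x j)) 0

/-- The projective squeezing function. -/
noncomputable def projSqueezing {d : ℕ} (D : Set (EuclideanSpace ℝ (Fin d)))
    (z : EuclideanSpace ℝ (Fin d)) : ℝ :=
  sSup (insert 0 {r : ℝ | 0 < r ∧ ∃ φ, IsProjectiveMap D φ ∧ φ z = 0 ∧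
    φ '' D ⊆ Metric.ball 0 1 ∧ Metric.ball 0 r ⊆ φ '' D})

lemma coord_le_norm {d : ℕ} (x : EuclideanSpace ℝ (Fin d)) (i : Fin d) :
    |x i| ≤ ‖x‖ := by
  rw [EuclideanSpace.norm_eq]
  have h1 : |x i| = Real.sqrt (‖x i‖ ^ 2) := by
    rw [Real.sqrt_sq_eq_abs, abs_norm, Real.norm_eq_abs]
  rw [h1]
  apply Real.sqrt_le_sqrt
  exact Finset.single_le_sum (f := fun j => ‖x j‖ ^ 2) (fun j _ => by positivity)
    (Finset.mem_univ i)

lemma aux_unbounded {d : ℕ} (D : Set (EuclideanSpace ℝ (Fin d)))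
    (hline : ∃ a v : EuclideanSpace ℝ (Fin d), v ≠ 0 ∧ ∀ t : ℝ, a + t • v ∈ D)
    (φ : EuclideanSpace ℝ (Fin d) → EuclideanSpace ℝ (Fin d))
    (hφ : IsProjectiveMap D φ) : ¬ Bornology.IsBounded (φ '' D) := by
  obtain ⟨a, v, hv, hav⟩ := hline
  obtain ⟨A, hdet, hA⟩ := hφ
  set u : Fin (d + 1) → ℝ := A.mulVec (Fin.cons 1 (fun i => a i)) with hu
  set w : Fin (d + 1) → ℝ := A.mulVec (Fin.cons 0 (fun i => v i)) with hwdef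
  have key : ∀ t : ℝ, A.mulVec (Fin.cons 1 (fun j => (a + t • v) j)) = u + t • w := by
    intro t
    have hsplit : (Fin.cons 1 (fun j => (a + t • v) j) : Fin (d + 1) → ℝ)
        = (Fin.cons 1 (fun i => a i) : Fin (d + 1) → ℝ)
          + t • (Fin.cons 0 (fun i => v i) : Fin (d + 1) → ℝ) := by
      funext k
      refine Fin.cases ?_ (fun j => ?_) k
      · simp
      · simp [PiLp.add_apply, PiLp.smul_apply]
    rw [hsplit, Matrix.mulVec_add, Matrix.mulVec_smul]
  have hu0 : u 0 ≠ 0 := by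
    have h := (hA _ (hav 0)).1
    have h0 := key 0
    rw [h0] at h
    simpa using h
  have hw0 : w 0 = 0 := by
    by_contra h
    have h2 := (hA _ (hav (-(u 0) / w 0))).1
    rw [key] at h2
    apply h2
    simp only [Pi.add_apply, Pi.smul_apply, smul_eq_mul]
    field_simp
    ring
  have hwne : w ≠ 0 := by
    intro h
    apply hv
    have h2 : (Fin.cons 0 (fun i => v i) : Fin (d + 1) → ℝ) = 0 := by
      have : (Fin.cons 0 (fun i => v i) : Fin (d + 1) → ℝ)
          = (A⁻¹ * A).mulVec (Fin.cons 0 (fun i => v i)) := by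
        rw [Matrix.nonsing_inv_mul A hdet, Matrix.one_mulVec]
      rw [this, ← Matrix.mulVec_mulVec, ← hwdef, h, Matrix.mulVec_zero]
    ext i
    have := congrFun h2 i.succ
    simpa using this
  obtain ⟨k, hk⟩ : ∃ k, w k ≠ 0 := by
    by_contra h
    push_neg at h
    exact hwne (funext h)
  obtain ⟨i, hi⟩ : ∃ i : Fin d, w i.succ ≠ 0 := by
    rcases Fin.eq_zero_or_eq_succ k with rfl | ⟨j, rfl⟩
    · exact absurd hw0 hk
    · exact ⟨j, hk⟩
  intro hb
  rw [isBounded_iff_forall_norm_le] at hb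
  obtain ⟨C, hC⟩ := hb
  set t : ℝ := ((|C| + 1) * |u 0| - u i.succ) / w i.succ with ht
  set x := a + t • v with hx
  have hxD : x ∈ D := hav t
  have hnum : A.mulVec (Fin.cons 1 fun j => x j) i.succ = (|C| + 1) * |u 0| := by
    rw [hx, key]
    simp only [Pi.add_apply, Pi.smul_apply, smul_eq_mul, ht]
    field_simp
    ring
  have hden : A.mulVec (Fin.cons 1 fun j => x j) 0 = u 0 := by
    rw [hx, key]
    simp [hw0]
  have hcoord : φ x i = (|C| + 1) * |u 0| / u 0 := by
    rw [(hA x hxD).2 i, hnum, hden]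
  have habs : |φ x i| = |C| + 1 := by
    rw [hcoord, abs_div, abs_mul, abs_abs,
      abs_of_pos (show (0:ℝ) < |C| + 1 by positivity),
      mul_div_assoc, div_self (abs_ne_zero.mpr hu0), mul_one]
  have hle := hC (φ x) ⟨x, hxD, rfl⟩
  have := coord_le_norm (φ x) i
  have hCabs := le_abs_self C
  linarith

/-- if a domain `D ⊆ ℝ^d` contains an affine line, then any projective map
injective on `D` has unbounded image of `D`; in particular the projective squeezing
function of `D` is identically `0`. -/
theorem stmt4 (d : ℕ) (hd : 1 ≤ d) (D : Set (EuclideanSpace ℝ (Fin d)))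
    (hD : IsOpen D) (hne : D.Nonempty) (hconn : IsConnected D)
    (hline : ∃ a v : EuclideanSpace ℝ (Fin d), v ≠ 0 ∧ ∀ t : ℝ, a + t • v ∈ D) :
    (∀ φ, IsProjectiveMap D φ → Set.InjOn φ D → ¬ Bornology.IsBounded (φ '' D)) ∧
    ∀ z ∈ D, projSqueezing D z = 0 := by
  constructor
  · exact fun φ hφ _ => aux_unbounded D hline φ hφ
  · intro z hz
    have hempty : {r : ℝ | 0 < r ∧ ∃ φ, IsProjectiveMap D φ ∧ φ z = 0 ∧
        φ '' D ⊆ Metric.ball 0 1 ∧ Metric.ball 0 r ⊆ φ '' D} = ∅ := by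
      ext r
      simp only [Set.mem_setOf_eq, Set.mem_empty_iff_false, iff_false, not_and]
      rintro hr ⟨φ, hφ, _, him, _⟩
      exact aux_unbounded D hline φ hφ ((Metric.isBounded_ball).subset him)
    rw [projSqueezing, hempty]
    simp [csSup_singleton]
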